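/- (Reverse direction of Lemma 1, bipartite form.) Let a, a' be invertible matrices on ℂ^{D₁} and b, b' invertible matrices on ℂ^{D₂}, and suppose a a' = c · a' a for a scalar c. If there exists a nonzero product vector ψ₁ ⊗ ψ₂ ∈ ℂ^{D₁} ⊗ ℂ^{D₂} with (a ⊗ b)(ψ₁ ⊗ ψ₂) = ψ₁ ⊗ ψ₂ and (a' ⊗ b')(ψ₁ ⊗ ψ₂) = ψ₁ ⊗ ψ₂, then c = 1, i.e. a and a' commute. -/

import Mathlib

open Matrix Kronecker

lemma kron_mulVec_prod {D1 D2 : ℕ} (A : Matrix (Fin D1) (Fin D1) ℂ)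
    (B : Matrix (Fin D2) (Fin D2) ℂ) (u : Fin D1 → ℂ) (v : Fin D2 → ℂ) :
    (A ⊗ₖ B).mulVec (fun p => u p.1 * v p.2)
      = fun p => A.mulVec u p.1 * B.mulVec v p.2 := by
  funext p
  simp only [Matrix.mulVec, dotProduct, Fintype.sum_prod_type,
    Matrix.kroneckerMap_apply]
  rw [Finset.sum_mul_sum]
  exact Finset.sum_congr rfl fun i _ => Finset.sum_congr rfl fun j _ => by ring

/-- Reverse direction of Lemma 1, bipartite form: if `a a' = c · a' a` and some nonzero
product vector `ψ₁ ⊗ ψ₂` is fixed by both `a ⊗ b` and `a' ⊗ b'` (with all four matrices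
invertible), then `c = 1`, i.e. `a` and `a'` commute. -/
theorem product_fixed_vector_forces_commutation (D1 D2 : ℕ)
    (a a' : Matrix (Fin D1) (Fin D1) ℂ) (b b' : Matrix (Fin D2) (Fin D2) ℂ)
    (ha : IsUnit a) (ha' : IsUnit a') (hb : IsUnit b) (hb' : IsUnit b')
    (c : ℂ) (hcomm : a * a' = c • (a' * a))
    (ψ1 : Fin D1 → ℂ) (ψ2 : Fin D2 → ℂ) (h1 : ψ1 ≠ 0) (h2 : ψ2 ≠ 0)
    (hfix : (a ⊗ₖ b).mulVec (fun p => ψ1 p.1 * ψ2 p.2) = fun p => ψ1 p.1 * ψ2 p.2)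
    (hfix' : (a' ⊗ₖ b').mulVec (fun p => ψ1 p.1 * ψ2 p.2) = fun p => ψ1 p.1 * ψ2 p.2) :
    c = 1 := by
  obtain ⟨i0, hi0⟩ := Function.ne_iff.mp h1
  obtain ⟨j0, hj0⟩ := Function.ne_iff.mp h2
  simp only [Pi.zero_apply] at hi0 hj0
  rw [kron_mulVec_prod] at hfix hfix'
  -- entrywise equations
  have key : ∀ (i : Fin D1) (j : Fin D2),
      a.mulVec ψ1 i * b.mulVec ψ2 j = ψ1 i * ψ2 j := fun i j =>
    congrFun hfix (i, j)
  have key' : ∀ (i : Fin D1) (j : Fin D2),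
      a'.mulVec ψ1 i * b'.mulVec ψ2 j = ψ1 i * ψ2 j := fun i j =>
    congrFun hfix' (i, j)
  -- extract eigenvalue equations for a and a'
  have hμ : b.mulVec ψ2 j0 ≠ 0 := by
    intro h
    have := key i0 j0
    rw [h, mul_zero] at this
    exact (mul_ne_zero hi0 hj0) this.symm
  have hμ' : b'.mulVec ψ2 j0 ≠ 0 := by
    intro h
    have := key' i0 j0
    rw [h, mul_zero] at this
    exact (mul_ne_zero hi0 hj0) this.symm
  set lam := ψ2 j0 / b.mulVec ψ2 j0 with hlam
  set lam' := ψ2 j0 / b'.mulVec ψ2 j0 with hlam'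
  have heig : a.mulVec ψ1 = lam • ψ1 := by
    funext i
    have := key i j0
    simp only [Pi.smul_apply, smul_eq_mul]
    rw [hlam, div_mul_eq_mul_div, eq_div_iff hμ]
    linear_combination this
  have heig' : a'.mulVec ψ1 = lam' • ψ1 := by
    funext i
    have := key' i j0
    simp only [Pi.smul_apply, smul_eq_mul]
    rw [hlam', div_mul_eq_mul_div, eq_div_iff hμ']
    linear_combination this
  have hlam_ne : lam ≠ 0 := div_ne_zero hj0 hμ
  have hlam'_ne : lam' ≠ 0 := div_ne_zero hj0 hμ'
  -- apply hcomm to ψ1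
  have hc : (a * a').mulVec ψ1 = c • ((a' * a).mulVec ψ1) := by
    rw [hcomm, Matrix.smul_mulVec]
  rw [← Matrix.mulVec_mulVec, ← Matrix.mulVec_mulVec, heig', heig,
    Matrix.mulVec_smul, Matrix.mulVec_smul, heig, heig'] at hc
  have heq := congrFun hc i0
  simp only [Pi.smul_apply, smul_eq_mul] at heq
  have hne : lam' * (lam * ψ1 i0) ≠ 0 :=
    mul_ne_zero hlam'_ne (mul_ne_zero hlam_ne hi0)
  have hz : (c - 1) * (lam' * (lam * ψ1 i0)) = 0 := by linear_combination -heq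
  rcases mul_eq_zero.mp hz with h | h
  · exact sub_eq_zero.mp h
  · exact absurd h hne
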